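/- Let F : U → ℍ² be a harmonic map from U = {|z| > 1} with Hopf differential φ dz² where φ = σ(F)² F_z conj(F)_z, and let ω be defined by e^{2ω} = |F_z|/|F_{z̄}| (where the poles of ω are the zeros of φ). If F_z and F_{z̄} have equal modulus along a smooth curve c(t) satisfying Re W(c(t)) ≡ const with W' = √φ, then F ∘ c is constant. -/

import Mathlib

lemma fderiv_apply_wirtinger' (F : ℂ → ℂ) (z v : ℂ) :
    fderiv ℝ F z v =
      ((fderiv ℝ F z 1 - Complex.I * fderiv ℝ F z Complex.I) / 2) * v +
      ((fderiv ℝ F z 1 + Complex.I * fderiv ℝ F z Complex.I) / 2) * (starRingEnd ℂ) v := by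
  set L := fderiv ℝ F z with hL
  have hv : v = (v.re : ℝ) • (1 : ℂ) + (v.im : ℝ) • Complex.I := by
    simp [Complex.real_smul]
  have hcv : (starRingEnd ℂ) v = (v.re : ℂ) - (v.im : ℂ) * Complex.I := by
    simp [Complex.ext_iff]
  have h1 : L v = (v.re : ℂ) * L 1 + (v.im : ℂ) * L Complex.I := by
    conv_lhs => rw [hv]
    rw [map_add, map_smul, map_smul, Complex.real_smul, Complex.real_smul]
  rw [h1, hcv]
  set x := (v.re : ℂ) with hx
  set y := (v.im : ℂ) with hy
  rw [show v = x + y * Complex.I from (Complex.re_add_im v).symm]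
  have hI := Complex.I_sq
  set a := L 1; set b := L Complex.I
  linear_combination (y * b) * hI

lemma add_eq_zero_of_abs_eq' (p q : ℂ) (h : ‖p‖ = ‖q‖)
    (r : ℝ) (hr : r ≤ 0) (hpq : p * (starRingEnd ℂ) q = (r : ℂ)) : p + q = 0 := by
  have habs : |r| = ‖p‖ * ‖q‖ := by
    have := congrArg norm hpq
    simpa [norm_mul] using this.symm
  have hre : (p * (starRingEnd ℂ) q).re = r := by rw [hpq]; simp
  have h0 : Complex.normSq (p + q) = 0 := by
    rw [Complex.normSq_add, hre]
    have hp : Complex.normSq p = ‖p‖ ^ 2 := (Complex.sq_norm p).symm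
    have hq : Complex.normSq q = ‖q‖ ^ 2 := (Complex.sq_norm q).symm
    rw [hp, hq, h]
    have : r = -(‖q‖ * ‖q‖) := by
      rw [abs_of_nonpos hr] at habs; rw [h] at habs; linarith
    rw [this]; ring
  exact Complex.normSq_eq_zero.mp h0



/-- Wirtinger derivative `F_z` of a map `F : ℂ → ℂ` (real-differentiable). -/
noncomputable def wirtingerZ (F : ℂ → ℂ) (z : ℂ) : ℂ :=
  (fderiv ℝ F z 1 - Complex.I * fderiv ℝ F z Complex.I) / 2

/-- Wirtinger derivative `F_z̄` of a map `F : ℂ → ℂ`. -/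
noncomputable def wirtingerZbar (F : ℂ → ℂ) (z : ℂ) : ℂ :=
  (fderiv ℝ F z 1 + Complex.I * fderiv ℝ F z Complex.I) / 2

/-- Conformal factor of the hyperbolic metric on the unit disk. -/
noncomputable def hypFactor (z : ℂ) : ℝ := 2 / (1 - ‖z‖ ^ 2)

/-- The Hopf differential coefficient `φ = σ(F)² F_z conj(F)_z` of `F`. -/
noncomputable def hopfCoeff (F : ℂ → ℂ) (z : ℂ) : ℂ :=
  ((hypFactor (F z) : ℝ) : ℂ) ^ 2 * wirtingerZ F z * (starRingEnd ℂ) (wirtingerZbar F z)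

/-- Let `F : U → ℍ²` (disk model) be a harmonic map with Hopf differential `φ dz²`,
`φ = σ(F)² F_z conj(F)_z`, on `U = {|z| > 1}`.  If `|F_z| = |F_z̄|` along a smooth
curve `c(t)` satisfying `Re W(c(t)) ≡ const`, where `W' = √φ` (equivalently
`Re (√φ(c(t)) · c'(t)) = 0` for all `t`), then `F ∘ c` is constant. -/
theorem harmonic_image_constant_on_level_curve
    (F : ℂ → ℂ) (hF : ContDiff ℝ 1 F)
    (hFD : ∀ z : ℂ, 1 < ‖z‖ → ‖F z‖ < 1)
    (sqphi : ℂ → ℂ) (hsq : ∀ z : ℂ, sqphi z ^ 2 = hopfCoeff F z)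
    (c : ℝ → ℂ) (hc : ContDiff ℝ 1 c)
    (hU : ∀ t : ℝ, 1 < ‖c t‖)
    (hRe : ∀ t : ℝ, (sqphi (c t) * deriv c t).re = 0)
    (hmod : ∀ t : ℝ, ‖wirtingerZ F (c t)‖ = ‖wirtingerZbar F (c t)‖) :
    ∀ t₁ t₂ : ℝ, F (c t₁) = F (c t₂) := by
  have hFd : Differentiable ℝ F := hF.differentiable one_ne_zero
  have hcd : Differentiable ℝ c := hc.differentiable one_ne_zero
  have hcomp : Differentiable ℝ (F ∘ c) := hFd.comp hcd
  intro t₁ t₂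
  apply is_const_of_deriv_eq_zero hcomp
  intro t
  set a := wirtingerZ F (c t) with ha
  set b := wirtingerZbar F (c t) with hb
  set u := deriv c t with hu
  have hchain : deriv (F ∘ c) t = fderiv ℝ F (c t) u := by
    have h1 : HasDerivAt c u t := (hcd t).hasDerivAt
    have h2 : HasFDerivAt F (fderiv ℝ F (c t)) (c t) := (hFd (c t)).hasFDerivAt
    exact (h2.comp_hasDerivAt t h1).deriv
  have hLu : fderiv ℝ F (c t) u = a * u + b * (starRingEnd ℂ) u :=
    fderiv_apply_wirtinger' F (c t) u
  have hs : 0 < hypFactor (F (c t)) := by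
    have h1 : ‖F (c t)‖ < 1 := hFD _ (hU t)
    have h2 : ‖F (c t)‖ ^ 2 < 1 := by
      nlinarith [norm_nonneg (F (c t))]
    unfold hypFactor
    have h3 : 0 < 1 - ‖F (c t)‖ ^ 2 := by linarith
    positivity
  set s : ℝ := hypFactor (F (c t)) with hsdef
  set w := sqphi (c t) * u with hw
  have hre0 : w.re = 0 := hRe t
  have hwsq : w ^ 2 = ((-(w.im ^ 2) : ℝ) : ℂ) := by
    apply Complex.ext <;>
      simp [pow_two, Complex.mul_re, Complex.mul_im, hre0]
  have hphi : (s : ℂ) ^ 2 * (a * (starRingEnd ℂ) b) * u ^ 2 = ((-(w.im ^ 2) : ℝ) : ℂ) := by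
    rw [← hwsq, hw, mul_pow, hsq, hopfCoeff]
    ring
  have hsne : ((s : ℂ)) ≠ 0 := by
    simp only [ne_eq, Complex.ofReal_eq_zero]
    exact ne_of_gt hs
  have habu : a * (starRingEnd ℂ) b * u ^ 2 = ((-(w.im ^ 2) / s ^ 2 : ℝ) : ℂ) := by
    field_simp
    push_cast at hphi ⊢
    field_simp
    linear_combination hphi
  have hkey : a * u + b * (starRingEnd ℂ) u = 0 := by
    apply add_eq_zero_of_abs_eq' (a * u) (b * (starRingEnd ℂ) u)
    · rw [norm_mul, norm_mul, hmod t, Complex.norm_conj]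
    · show -(w.im ^ 2) / s ^ 2 ≤ 0
      apply div_nonpos_of_nonpos_of_nonneg
      · nlinarith [sq_nonneg w.im]
      · positivity
    · rw [map_mul, Complex.conj_conj]
      calc a * u * ((starRingEnd ℂ) b * u) = a * (starRingEnd ℂ) b * u ^ 2 := by ring
        _ = _ := habu
  rw [hchain, hLu, hkey]
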